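/- If the quadrangle inequality d_{i-1,l-1} + d_{j-1,k-1} ≤ d_{i-1,k-1} + d_{j-1,l-1} holds for all i ≤ j ≤ k ≤ l up to level n−1, then the transport problem for d_{m,n} (m ≤ n) admits an optimal transport plan that is both simple and nested, i.e. z_{i,i} = min(π_i^m, π_i^n) for all i, and there are no indices i < j < k < l with z_{i,k} > 0 and z_{j,l} > 0. -/

import Mathlib

/-- `p` is a probability distribution on `ℕ` supported on `{0,…,n}`. -/
def IsProbOn (p : ℕ → ℝ) (n : ℕ) : Prop :=
  (∀ i, 0 ≤ p i) ∧ (∀ i, n < i → p i = 0) ∧ ∑ i ∈ Finset.range (n + 1), p i = 1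

/-- `z` is a transport plan from `μ` (supported on `{0,…,m}`) to `ν` (supported on `{0,…,n}`):
a nonnegative matrix on the rectangle `{0,…,m} × {0,…,n}` with row sums `μ` and column sums `ν`. -/
def IsPlan (μ ν : ℕ → ℝ) (m n : ℕ) (z : ℕ → ℕ → ℝ) : Prop :=
  (∀ i j, 0 ≤ z i j) ∧
  (∀ i j, m < i ∨ n < j → z i j = 0) ∧
  (∀ i, i ≤ m → ∑ j ∈ Finset.range (n + 1), z i j = μ i) ∧
  (∀ j, j ≤ n → ∑ i ∈ Finset.range (m + 1), z i j = ν j)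

/-- Transport cost of the plan `z` with ground cost `(i,j) ↦ D i j` (where `D i j`
encodes `d_{i-1,j-1}` of the paper, indices shifted by one so that `0` plays the role of `-1`). -/
noncomputable def cost (D : ℕ → ℕ → ℝ) (m n : ℕ) (z : ℕ → ℕ → ℝ) : ℝ :=
  ∑ i ∈ Finset.range (m + 1), ∑ j ∈ Finset.range (n + 1), z i j * D i j

/-- `D` is the recursive optimal transport family associated with the weights `π`:
indices are shifted by one, so `D (m+1) (n+1) = d_{m,n}`, `D 0 (j+1) = d_{-1,j} = 1`,
`D 0 0 = d_{-1,-1} = 0`, and `d_{m,n}` is the minimum transport cost from `π m` to `π n`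
with ground cost `(i,j) ↦ d_{i-1,j-1} = D i j`. -/
def IsRecursiveOT (π : ℕ → ℕ → ℝ) (D : ℕ → ℕ → ℝ) : Prop :=
  D 0 0 = 0 ∧ (∀ j, D 0 (j + 1) = 1) ∧ (∀ i, D (i + 1) 0 = 1) ∧
  ∀ m n, IsLeast {c : ℝ | ∃ z, IsPlan (π m) (π n) m n z ∧ c = cost D m n z}
    (D (m + 1) (n + 1))

/-- Condition (H): `π_n^n > 0` and `π_i^n ≤ π_i^{n-1}` for `i < n`. -/
def CondH (π : ℕ → ℕ → ℝ) : Prop :=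
  ∀ n, 0 < π (n + 1) (n + 1) ∧ ∀ i, i ≤ n → π (n + 1) i ≤ π n i

section Helpers
variable (π D : ℕ → ℕ → ℝ)

theorem rot_exists_opt (hD : IsRecursiveOT π D) (m n : ℕ) :
    ∃ z, IsPlan (π m) (π n) m n z ∧ cost D m n z = D (m+1) (n+1) := by
  obtain ⟨z, hz, hc⟩ := (hD.2.2.2 m n).1
  exact ⟨z, hz, hc.symm⟩

theorem rot_le_cost (hD : IsRecursiveOT π D) (m n : ℕ) (z : ℕ → ℕ → ℝ)
    (hz : IsPlan (π m) (π n) m n z) : D (m+1) (n+1) ≤ cost D m n z :=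
  (hD.2.2.2 m n).2 ⟨z, hz, rfl⟩

theorem D_nonneg (hD : IsRecursiveOT π D) : ∀ k i j, i + j ≤ k → 0 ≤ D i j := by
  intro k
  induction k with
  | zero =>
    intro i j h
    obtain ⟨rfl, rfl⟩ : i = 0 ∧ j = 0 := by omega
    rw [hD.1]
  | succ k IH =>
    intro i j h
    match i, j with
    | 0, 0 => rw [hD.1]
    | 0, j+1 => rw [hD.2.1]; norm_num
    | i+1, 0 => rw [hD.2.2.1]; norm_num
    | a+1, b+1 =>
      obtain ⟨z, hz, hc⟩ := rot_exists_opt π D hD a b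
      rw [← hc]
      unfold cost
      refine Finset.sum_nonneg fun p hp => Finset.sum_nonneg fun q hq => ?_
      have hp' := Finset.mem_range.mp hp
      have hq' := Finset.mem_range.mp hq
      exact mul_nonneg (hz.1 p q) (IH p q (by omega))

theorem D_diag (hπ : ∀ n, IsProbOn (π n) n) (hD : IsRecursiveOT π D) :
    ∀ k i, i ≤ k → D i i = 0 := by
  intro k
  induction k with
  | zero =>
    intro i h
    obtain rfl : i = 0 := by omega
    exact hD.1
  | succ k IH =>
    intro i h
    rcases Nat.lt_or_ge i (k+1) with h' | h'
    · exact IH i (by omega)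
    · obtain rfl : i = k + 1 := by omega
      have hplan : IsPlan (π k) (π k) k k (fun p q => if p = q then π k p else 0) := by
        refine ⟨?_, ?_, ?_, ?_⟩
        · intro p q; dsimp only; split_ifs
          · exact (hπ k).1 p
          · exact le_refl 0
        · intro p q hpq; dsimp only; split_ifs with he
          · subst he; exact (hπ k).2.1 p (by omega)
          · rfl
        · intro p hp; dsimp only
          rw [Finset.sum_ite_eq (Finset.range (k+1)) p (fun _ => π k p),
            if_pos (Finset.mem_range.mpr (by omega))]
        · intro q hq; dsimp only
          rw [Finset.sum_ite_eq' (Finset.range (k+1)) q (fun p => π k p),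
            if_pos (Finset.mem_range.mpr (by omega))]
      have hle := rot_le_cost π D hD k k _ hplan
      have hc0 : cost D k k (fun p q => if p = q then π k p else 0) = 0 := by
        unfold cost
        refine Finset.sum_eq_zero fun p hp => Finset.sum_eq_zero fun q hq => ?_
        dsimp only
        split_ifs with he
        · subst he
          rw [IH p (by have := Finset.mem_range.mp hp; omega), mul_zero]
        · exact zero_mul _
      refine le_antisymm ?_ (D_nonneg π D hD (2*(k+1)) _ _ (by omega))
      rw [hc0] at hle
      exact hle

theorem D_le_two (hπ : ∀ n, IsProbOn (π n) n) (hD : IsRecursiveOT π D) :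
    ∀ k i j, i + j ≤ k → D i j ≤ 2 := by
  intro k
  induction k with
  | zero =>
    intro i j h
    obtain ⟨rfl, rfl⟩ : i = 0 ∧ j = 0 := by omega
    rw [hD.1]; norm_num
  | succ k IH =>
    intro i j h
    match i, j with
    | 0, 0 => rw [hD.1]; norm_num
    | 0, j+1 => rw [hD.2.1]; norm_num
    | i+1, 0 => rw [hD.2.2.1]; norm_num
    | a+1, b+1 =>
      have hplan : IsPlan (π a) (π b) a b (fun p q => π a p * π b q) := by
        refine ⟨fun p q => mul_nonneg ((hπ a).1 p) ((hπ b).1 q), ?_, ?_, ?_⟩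
        · intro p q hpq
          rcases hpq with h' | h'
          · dsimp only; rw [(hπ a).2.1 p h', zero_mul]
          · dsimp only; rw [(hπ b).2.1 q h', mul_zero]
        · intro p hp; dsimp only; rw [← Finset.mul_sum, (hπ b).2.2, mul_one]
        · intro q hq; dsimp only; rw [← Finset.sum_mul, (hπ a).2.2, one_mul]
      have h1 := rot_le_cost π D hD a b _ hplan
      have h2 : cost D a b (fun p q => π a p * π b q) ≤ 2 := by
        unfold cost
        have hstep : ∀ p ∈ Finset.range (a+1),
            ∑ q ∈ Finset.range (b+1), π a p * π b q * D p q ≤ π a p * 2 := by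
          intro p hp
          have hb : ∀ q ∈ Finset.range (b+1),
              π a p * π b q * D p q ≤ π a p * π b q * 2 := by
            intro q hq
            have hp' := Finset.mem_range.mp hp
            have hq' := Finset.mem_range.mp hq
            exact mul_le_mul_of_nonneg_left (IH p q (by omega))
              (mul_nonneg ((hπ a).1 p) ((hπ b).1 q))
          refine le_trans (Finset.sum_le_sum hb) ?_
          have : ∀ q, π a p * π b q * 2 = π a p * 2 * π b q := by intro q; ring
          simp_rw [this]
          rw [← Finset.mul_sum, (hπ b).2.2, mul_one]
        refine le_trans (Finset.sum_le_sum hstep) ?_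
        rw [← Finset.sum_mul, (hπ a).2.2, one_mul]
      linarith

theorem D_tri (hπ : ∀ n, IsProbOn (π n) n) (hD : IsRecursiveOT π D) :
    ∀ s a b c, a + b + c ≤ s → D a b ≤ D a c + D c b := by
  have hnn : ∀ i j, 0 ≤ D i j := fun i j => D_nonneg π D hD (i+j) i j le_rfl
  intro s
  induction s with
  | zero =>
    intro a b c h
    obtain ⟨rfl, rfl, rfl⟩ : a = 0 ∧ b = 0 ∧ c = 0 := by omega
    rw [hD.1]
    linarith [hnn 0 0]
  | succ s IH =>
    intro a b c h
    match a, b, c with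
    | 0, 0, c => rw [hD.1]; linarith [hnn 0 c, hnn c 0]
    | 0, b+1, 0 => rw [hD.2.1, hD.1]; linarith
    | 0, b+1, c+1 => rw [hD.2.1, hD.2.1]; linarith [hnn (c+1) (b+1)]
    | a+1, 0, 0 => rw [hD.2.2.1, hD.1]; linarith
    | a+1, 0, c+1 => rw [hD.2.2.1, hD.2.2.1]; linarith [hnn (a+1) (c+1)]
    | a+1, b+1, 0 =>
      rw [hD.2.2.1, hD.2.1]
      linarith [D_le_two π D hπ hD (a+1+(b+1)) (a+1) (b+1) le_rfl]
    | a+1, b+1, c+1 =>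
      obtain ⟨x, hx, hxc⟩ := rot_exists_opt π D hD a c
      obtain ⟨y, hy, hyc⟩ := rot_exists_opt π D hD c b
      have hκ0 : ∀ k, 0 ≤ π c k := (hπ c).1
      have hxz : ∀ i k, k ≤ c → π c k = 0 → x i k = 0 := by
        intro i k hk h0
        by_cases hi : i ≤ a
        · have hcol := hx.2.2.2 k hk
          have hnonneg : ∀ p ∈ Finset.range (a+1), 0 ≤ x p k := fun p _ => hx.1 p k
          have hle : x i k ≤ ∑ p ∈ Finset.range (a+1), x p k :=
            Finset.single_le_sum hnonneg (Finset.mem_range.mpr (by omega))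
          have := hx.1 i k
          rw [hcol, h0] at hle
          linarith
        · exact hx.2.1 i k (Or.inl (by omega))
      have hyz : ∀ k j, k ≤ c → π c k = 0 → y k j = 0 := by
        intro k j hk h0
        by_cases hj : j ≤ b
        · have hrow := hy.2.2.1 k hk
          have hnonneg : ∀ q ∈ Finset.range (b+1), 0 ≤ y k q := fun q _ => hy.1 k q
          have hle : y k j ≤ ∑ q ∈ Finset.range (b+1), y k q :=
            Finset.single_le_sum hnonneg (Finset.mem_range.mpr (by omega))
          have := hy.1 k j
          rw [hrow, h0] at hle
          linarith
        · exact hy.2.1 k j (Or.inr (by omega))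
      set w : ℕ → ℕ → ℝ :=
        fun i j => ∑ k ∈ Finset.range (c+1),
          if π c k = 0 then 0 else x i k * y k j / π c k with hw
      have hterm_nonneg : ∀ i j k, 0 ≤ (if π c k = 0 then 0 else x i k * y k j / π c k) := by
        intro i j k
        split_ifs with h0
        · exact le_refl 0
        · exact div_nonneg (mul_nonneg (hx.1 i k) (hy.1 k j)) (hκ0 k)
      have hwplan : IsPlan (π a) (π b) a b w := by
        refine ⟨fun i j => Finset.sum_nonneg fun k _ => hterm_nonneg i j k, ?_, ?_, ?_⟩
        · intro i j hij
          refine Finset.sum_eq_zero fun k hk => ?_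
          split_ifs with h0
          · rfl
          rcases hij with hi | hj
          · rw [hx.2.1 i k (Or.inl hi), zero_mul, zero_div]
          · rw [hy.2.1 k j (Or.inr hj), mul_zero, zero_div]
        · intro i hi
          rw [hw]
          dsimp only
          rw [Finset.sum_comm]
          have hinner : ∀ k ∈ Finset.range (c+1),
              (∑ j ∈ Finset.range (b+1), if π c k = 0 then 0 else x i k * y k j / π c k)
                = x i k := by
            intro k hk
            have hk' := Finset.mem_range.mp hk
            by_cases h0 : π c k = 0
            · simp [h0, hxz i k (by omega) h0]
            · simp only [if_neg h0]
              have : ∀ j, x i k * y k j / π c k = x i k / π c k * y k j := by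
                intro j; ring
              simp_rw [this]
              rw [← Finset.mul_sum, hy.2.2.1 k (by omega), div_mul_cancel₀ _ h0]
          rw [Finset.sum_congr rfl hinner, hx.2.2.1 i hi]
        · intro j hj
          rw [hw]
          dsimp only
          rw [Finset.sum_comm]
          have hinner : ∀ k ∈ Finset.range (c+1),
              (∑ i ∈ Finset.range (a+1), if π c k = 0 then 0 else x i k * y k j / π c k)
                = y k j := by
            intro k hk
            have hk' := Finset.mem_range.mp hk
            by_cases h0 : π c k = 0
            · simp [h0, hyz k j (by omega) h0]
            · simp only [if_neg h0]
              have : ∀ i, x i k * y k j / π c k = x i k * (y k j / π c k) := by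
                intro i; ring
              simp_rw [this]
              rw [← Finset.sum_mul, hx.2.2.2 k (by omega)]
              field_simp
          rw [Finset.sum_congr rfl hinner, hy.2.2.2 j hj]
      have hK := rot_le_cost π D hD a b w hwplan
      have hcost : cost D a b w ≤ cost D a c x + cost D c b y := by
        unfold cost
        have hstep : ∀ p ∈ Finset.range (a+1), ∀ q ∈ Finset.range (b+1),
            w p q * D p q ≤ ∑ k ∈ Finset.range (c+1),
              (if π c k = 0 then 0 else x p k * y k q / π c k) * (D p k + D k q) := by
          intro p hp q hq
          rw [hw]
          dsimp only
          rw [Finset.sum_mul]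
          refine Finset.sum_le_sum fun k hk => ?_
          have hp' := Finset.mem_range.mp hp
          have hq' := Finset.mem_range.mp hq
          have hk' := Finset.mem_range.mp hk
          exact mul_le_mul_of_nonneg_left (IH p q k (by omega)) (hterm_nonneg p q k)
        refine le_trans
          (Finset.sum_le_sum fun p hp => Finset.sum_le_sum fun q hq => hstep p hp q hq) ?_
        have hsplit : ∀ p q k, (if π c k = 0 then 0 else x p k * y k q / π c k) * (D p k + D k q)
            = (if π c k = 0 then 0 else x p k * y k q / π c k) * D p k
              + (if π c k = 0 then 0 else x p k * y k q / π c k) * D k q := by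
          intro p q k; ring
        simp_rw [hsplit, Finset.sum_add_distrib]
        have hfirst : ∑ p ∈ Finset.range (a+1), ∑ q ∈ Finset.range (b+1),
            ∑ k ∈ Finset.range (c+1),
              (if π c k = 0 then 0 else x p k * y k q / π c k) * D p k
            = ∑ p ∈ Finset.range (a+1), ∑ k ∈ Finset.range (c+1), x p k * D p k := by
          refine Finset.sum_congr rfl fun p _ => ?_
          rw [Finset.sum_comm]
          refine Finset.sum_congr rfl fun k hk => ?_
          have hk' := Finset.mem_range.mp hk
          by_cases h0 : π c k = 0
          · simp [h0, hxz p k (by omega) h0]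
          · simp only [if_neg h0]
            have : ∀ q, x p k * y k q / π c k * D p k
                = x p k * D p k / π c k * y k q := by intro q; ring
            simp_rw [this]
            rw [← Finset.mul_sum, hy.2.2.1 k (by omega), div_mul_cancel₀ _ h0]
        have haux : ∀ q ∈ Finset.range (b+1),
            ∑ p ∈ Finset.range (a+1), ∑ k ∈ Finset.range (c+1),
              (if π c k = 0 then 0 else x p k * y k q / π c k) * D k q
            = ∑ k ∈ Finset.range (c+1), y k q * D k q := by
          intro q hq
          rw [Finset.sum_comm]
          refine Finset.sum_congr rfl fun k hk => ?_
          have hk' := Finset.mem_range.mp hk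
          by_cases h0 : π c k = 0
          · simp [h0, hyz k q (by omega) h0]
          · simp only [if_neg h0]
            have : ∀ p, x p k * y k q / π c k * D k q
                = x p k * (y k q * D k q / π c k) := by intro p; ring
            simp_rw [this]
            rw [← Finset.sum_mul, hx.2.2.2 k (by omega)]
            field_simp
        have hsecond : ∑ p ∈ Finset.range (a+1), ∑ q ∈ Finset.range (b+1),
            ∑ k ∈ Finset.range (c+1),
              (if π c k = 0 then 0 else x p k * y k q / π c k) * D k q
            = ∑ k ∈ Finset.range (c+1), ∑ q ∈ Finset.range (b+1), y k q * D k q := by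
          rw [Finset.sum_comm, Finset.sum_congr rfl haux, Finset.sum_comm]
        rw [hfirst, hsecond]
      rw [← hxc, ← hyc]
      exact le_trans hK hcost

end Helpers

noncomputable def ind {α β : Type} [DecidableEq α] [DecidableEq β] (a : α) (b : β)
    (p : α) (q : β) : ℝ :=
  (if p = a then 1 else 0) * (if q = b then 1 else 0)

theorem ind_sum_right {α β : Type} [DecidableEq α] [DecidableEq β] [Fintype β]
    (a : α) (b : β) (p : α) : ∑ q, ind a b p q = if p = a then 1 else 0 := by
  unfold ind
  rw [← Finset.mul_sum, Finset.sum_ite_eq' Finset.univ b (fun _ => (1:ℝ))]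
  simp

theorem ind_sum_left {α β : Type} [DecidableEq α] [DecidableEq β] [Fintype α]
    (a : α) (b : β) (q : β) : ∑ p, ind a b p q = if q = b then 1 else 0 := by
  unfold ind
  rw [← Finset.sum_mul, Finset.sum_ite_eq' Finset.univ a (fun _ => (1:ℝ))]
  simp

theorem sum_mul_ind {α β : Type} [DecidableEq α] [DecidableEq β] [Fintype α] [Fintype β]
    (a : α) (b : β) (f : α → β → ℝ) :
    ∑ p, ∑ q, ind a b p q * f p q = f a b := by
  unfold ind
  simp only [ite_mul, one_mul, zero_mul]
  rw [Fintype.sum_eq_single a (fun x hx => Finset.sum_eq_zero fun q _ => by simp [hx])]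
  rw [Fintype.sum_eq_single b (fun q hq => by simp [hq])]
  simp


theorem swap_lemma {m n : ℕ} (μ ν : ℕ → ℝ)
    (w : Fin (m+1) → Fin (n+1) → ℝ)
    (hw0 : ∀ p q, 0 ≤ w p q)
    (hwr : ∀ p, ∑ q, w p q = μ p.val)
    (hwc : ∀ q, ∑ p, w p q = ν q.val)
    (r1 r2 : Fin (m+1)) (c1 c2 : Fin (n+1))
    (hr : r1 ≠ r2) (hc : c1 ≠ c2)
    (h1 : 0 < w r1 c2) (h2 : 0 < w r2 c1) :
    ∃ w' : Fin (m+1) → Fin (n+1) → ℝ,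
      (∀ p q, 0 ≤ w' p q) ∧ (∀ p, ∑ q, w' p q = μ p.val) ∧ (∀ q, ∑ p, w' p q = ν q.val) ∧
      ∀ φ : Fin (m+1) → Fin (n+1) → ℝ,
        ∑ p, ∑ q, w' p q * φ p q =
          ∑ p, ∑ q, w p q * φ p q +
            min (w r1 c2) (w r2 c1) * (φ r1 c1 + φ r2 c2 - φ r1 c2 - φ r2 c1) := by
  set ε := min (w r1 c2) (w r2 c1) with hεdef
  have hε : 0 < ε := lt_min h1 h2
  have hεle1 : ε ≤ w r1 c2 := min_le_left _ _
  have hεle2 : ε ≤ w r2 c1 := min_le_right _ _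
  refine ⟨fun p q => w p q +
      ε * (ind r1 c1 p q + ind r2 c2 p q - ind r1 c2 p q - ind r2 c1 p q), ?_, ?_, ?_, ?_⟩
  · intro p q
    have base := hw0 p q
    by_cases hp1 : p = r1 <;> by_cases hp2 : p = r2
    · exact absurd (hp1.symm.trans hp2) hr
    all_goals by_cases hq1 : q = c1 <;> by_cases hq2 : q = c2
    all_goals first
      | exact absurd (hq1.symm.trans hq2) hc
      | (simp only [ind, hp1, hp2, hq1, hq2, if_true, if_false, ite_true, ite_false,
          eq_self_iff_true, not_false_iff, hr, hc, Ne.symm hr, Ne.symm hc, mul_one, mul_zero, one_mul, zero_mul] at base ⊢;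
         linarith [base, hεle1, hεle2, hε.le])
  · intro p
    rw [Finset.sum_add_distrib, hwr p, ← Finset.mul_sum]
    have hz : ∑ q, (ind r1 c1 p q + ind r2 c2 p q - ind r1 c2 p q - ind r2 c1 p q) = 0 := by
      rw [Finset.sum_sub_distrib, Finset.sum_sub_distrib, Finset.sum_add_distrib,
        ind_sum_right, ind_sum_right, ind_sum_right, ind_sum_right]
      ring
    rw [hz, mul_zero, add_zero]
  · intro q
    rw [Finset.sum_add_distrib, hwc q, ← Finset.mul_sum]
    have hz : ∑ p, (ind r1 c1 p q + ind r2 c2 p q - ind r1 c2 p q - ind r2 c1 p q) = 0 := by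
      rw [Finset.sum_sub_distrib, Finset.sum_sub_distrib, Finset.sum_add_distrib,
        ind_sum_left, ind_sum_left, ind_sum_left, ind_sum_left]
      ring
    rw [hz, mul_zero, add_zero]
  · intro φ
    have hexp : ∀ p q,
        (w p q + ε * (ind r1 c1 p q + ind r2 c2 p q - ind r1 c2 p q - ind r2 c1 p q)) * φ p q
        = w p q * φ p q + ε * (ind r1 c1 p q * φ p q) + ε * (ind r2 c2 p q * φ p q)
          - ε * (ind r1 c2 p q * φ p q) - ε * (ind r2 c1 p q * φ p q) := by
      intro p q; ring
    simp_rw [hexp]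
    simp_rw [Finset.sum_sub_distrib, Finset.sum_add_distrib, ← Finset.mul_sum]
    rw [sum_mul_ind, sum_mul_ind, sum_mul_ind, sum_mul_ind]
    ring

/-- if the quadrangle inequality holds up to level `n − 1` (in shifted
indices: for all `i ≤ j ≤ k ≤ l ≤ n`), then for every `m ≤ n` the transport problem
for `d_{m,n}` admits an optimal plan that is both simple and nested. -/
theorem exists_simple_nested_optimal_plan (π D : ℕ → ℕ → ℝ)
    (hπ : ∀ n, IsProbOn (π n) n)
    (hD : IsRecursiveOT π D)
    (n : ℕ)
    (hQ : ∀ i j k l : ℕ, i ≤ j → j ≤ k → k ≤ l → l ≤ n →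
      D i l + D j k ≤ D i k + D j l) :
    ∀ m : ℕ, m ≤ n →
      ∃ z : ℕ → ℕ → ℝ, IsPlan (π m) (π n) m n z ∧
        cost D m n z = D (m + 1) (n + 1) ∧
        (∀ i, i ≤ m → z i i = min (π m i) (π n i)) ∧
        (∀ i j k l : ℕ, i < j → j < k → k < l → z i k = 0 ∨ z j l = 0) := by
  intro m hmn
  classical
  have hdiag : ∀ i, D i i = 0 := fun i => D_diag π D hπ hD i i le_rfl
  have htri : ∀ a b c, D a b ≤ D a c + D c b := fun a b c =>
    D_tri π D hπ hD (a+b+c) a b c le_rfl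
  set K := D (m+1) (n+1) with hKdef
  set S : Set (Fin (m+1) → Fin (n+1) → ℝ) :=
    {w | (∀ p q, 0 ≤ w p q) ∧ (∀ p, ∑ q, w p q = π m p.val) ∧
         (∀ q, ∑ p, w p q = π n q.val) ∧
         ∑ p, ∑ q, w p q * D p.val q.val = K} with hSdef
  set toP : (Fin (m+1) → Fin (n+1) → ℝ) → ℕ → ℕ → ℝ :=
    fun w i j => if h : i < m+1 ∧ j < n+1 then w ⟨i, h.1⟩ ⟨j, h.2⟩ else 0 with htoP
  -- restriction of an arbitrary matrix is a plan with matching cost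
  have hplan_of : ∀ w : Fin (m+1) → Fin (n+1) → ℝ,
      (∀ p q, 0 ≤ w p q) → (∀ p, ∑ q, w p q = π m p.val) →
      (∀ q, ∑ p, w p q = π n q.val) →
      IsPlan (π m) (π n) m n (toP w) ∧
        cost D m n (toP w) = ∑ p, ∑ q, w p q * D p.val q.val := by
    intro w h0 hr hc
    have hval : ∀ (i : ℕ) (j : ℕ) (hi : i < m+1) (hj : j < n+1),
        toP w i j = w ⟨i, hi⟩ ⟨j, hj⟩ := by
      intro i j hi hj
      rw [htoP]
      exact dif_pos ⟨hi, hj⟩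
    constructor
    · refine ⟨?_, ?_, ?_, ?_⟩
      · intro i j
        rw [htoP]
        dsimp only
        split_ifs with h
        · exact h0 _ _
        · exact le_refl 0
      · intro i j hij
        rw [htoP]
        dsimp only
        rw [dif_neg (by omega)]
      · intro i hi
        have hi' : i < m + 1 := by omega
        rw [← Fin.sum_univ_eq_sum_range (fun j => toP w i j) (n+1)]
        have : ∀ j : Fin (n+1), toP w i j.val = w ⟨i, hi'⟩ j := by
          intro j
          rw [hval i j.val hi' j.isLt]
        rw [Finset.sum_congr rfl fun j _ => this j]
        exact hr ⟨i, hi'⟩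
      · intro j hj
        have hj' : j < n + 1 := by omega
        rw [← Fin.sum_univ_eq_sum_range (fun i => toP w i j) (m+1)]
        have : ∀ i : Fin (m+1), toP w i.val j = w i ⟨j, hj'⟩ := by
          intro i
          rw [hval i.val j i.isLt hj']
        rw [Finset.sum_congr rfl fun i _ => this i]
        exact hc ⟨j, hj'⟩
    · unfold cost
      rw [← Fin.sum_univ_eq_sum_range
        (fun i => ∑ j ∈ Finset.range (n+1), toP w i j * D i j) (m+1)]
      refine Finset.sum_congr rfl fun p _ => ?_
      rw [← Fin.sum_univ_eq_sum_range (fun j => toP w p.val j * D p.val j) (n+1)]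
      refine Finset.sum_congr rfl fun q _ => ?_
      rw [hval p.val q.val p.isLt q.isLt]
  -- S is nonempty
  have hSne : S.Nonempty := by
    obtain ⟨z0, hz0, hz0c⟩ := rot_exists_opt π D hD m n
    refine ⟨fun p q => z0 p.val q.val, fun p q => hz0.1 _ _, ?_, ?_, ?_⟩
    · intro p
      rw [Fin.sum_univ_eq_sum_range (fun q => z0 p.val q) (n+1)]
      exact hz0.2.2.1 p.val (by omega)
    · intro q
      rw [Fin.sum_univ_eq_sum_range (fun p => z0 p q.val) (m+1)]
      exact hz0.2.2.2 q.val (by omega)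
    · rw [hKdef, ← hz0c]
      unfold cost
      rw [← Fin.sum_univ_eq_sum_range
        (fun i => ∑ j ∈ Finset.range (n+1), z0 i j * D i j) (m+1)]
      refine Finset.sum_congr rfl fun p _ => ?_
      rw [← Fin.sum_univ_eq_sum_range (fun j => z0 p.val j * D p.val j) (n+1)]
  -- S is compact
  have hclosed : IsClosed S := by
    rw [hSdef]
    have e1 : IsClosed {w : Fin (m+1) → Fin (n+1) → ℝ | ∀ p q, 0 ≤ w p q} := by
      have : {w : Fin (m+1) → Fin (n+1) → ℝ | ∀ p q, 0 ≤ w p q}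
          = ⋂ p, ⋂ q, {w : Fin (m+1) → Fin (n+1) → ℝ | 0 ≤ w p q} := by
        ext w; simp [Set.mem_iInter]
      rw [this]
      exact isClosed_iInter fun p => isClosed_iInter fun q =>
        isClosed_le continuous_const ((continuous_apply q).comp (continuous_apply p))
    have e2 : IsClosed {w : Fin (m+1) → Fin (n+1) → ℝ | ∀ p, ∑ q, w p q = π m p.val} := by
      have : {w : Fin (m+1) → Fin (n+1) → ℝ | ∀ p, ∑ q, w p q = π m p.val}
          = ⋂ p, {w : Fin (m+1) → Fin (n+1) → ℝ | ∑ q, w p q = π m p.val} := by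
        ext w; simp [Set.mem_iInter]
      rw [this]
      exact isClosed_iInter fun p => isClosed_eq
        (continuous_finset_sum _ fun q _ => (continuous_apply q).comp (continuous_apply p))
        continuous_const
    have e3 : IsClosed {w : Fin (m+1) → Fin (n+1) → ℝ | ∀ q, ∑ p, w p q = π n q.val} := by
      have : {w : Fin (m+1) → Fin (n+1) → ℝ | ∀ q, ∑ p, w p q = π n q.val}
          = ⋂ q, {w : Fin (m+1) → Fin (n+1) → ℝ | ∑ p, w p q = π n q.val} := by
        ext w; simp [Set.mem_iInter]
      rw [this]
      exact isClosed_iInter fun q => isClosed_eq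
        (continuous_finset_sum _ fun p _ => (continuous_apply q).comp (continuous_apply p))
        continuous_const
    have e4 : IsClosed {w : Fin (m+1) → Fin (n+1) → ℝ |
        ∑ p, ∑ q, w p q * D p.val q.val = K} :=
      isClosed_eq (continuous_finset_sum _ fun p _ => continuous_finset_sum _ fun q _ =>
        ((continuous_apply q).comp (continuous_apply p)).mul continuous_const)
        continuous_const
    have : {w : Fin (m+1) → Fin (n+1) → ℝ | (∀ p q, 0 ≤ w p q) ∧
        (∀ p, ∑ q, w p q = π m p.val) ∧ (∀ q, ∑ p, w p q = π n q.val) ∧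
        ∑ p, ∑ q, w p q * D p.val q.val = K}
        = {w : Fin (m+1) → Fin (n+1) → ℝ | ∀ p q, 0 ≤ w p q}
          ∩ ({w | ∀ p, ∑ q, w p q = π m p.val}
            ∩ ({w | ∀ q, ∑ p, w p q = π n q.val}
              ∩ {w | ∑ p, ∑ q, w p q * D p.val q.val = K})) := by
      ext w; simp [Set.mem_inter_iff, Set.mem_setOf_eq, and_assoc]
    rw [this]
    exact e1.inter (e2.inter (e3.inter e4))
  have hsub : S ⊆ Metric.closedBall 0 1 := by
    intro w hw
    obtain ⟨h0, hr, _, _⟩ := hw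
    rw [Metric.mem_closedBall, dist_zero_right]
    refine pi_norm_le_iff_of_nonneg zero_le_one |>.mpr fun p => ?_
    refine pi_norm_le_iff_of_nonneg zero_le_one |>.mpr fun q => ?_
    rw [Real.norm_eq_abs, abs_le]
    constructor
    · linarith [h0 p q]
    · have h1 : w p q ≤ ∑ q', w p q' :=
        Finset.single_le_sum (fun q' _ => h0 p q') (Finset.mem_univ q)
      have h2 : π m p.val ≤ 1 := by
        have := Finset.single_le_sum (fun i (_ : i ∈ Finset.range (m+1)) => (hπ m).1 i)
          (Finset.mem_range.mpr p.isLt)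
        rw [(hπ m).2.2] at this
        exact this
      rw [hr p] at h1
      linarith
  have hScompact : IsCompact S :=
    (isCompact_closedBall (0 : Fin (m+1) → Fin (n+1) → ℝ) 1).of_isClosed_subset
      hclosed hsub
  -- the secondary objective
  set cc : Fin (m+1) → Fin (n+1) → ℝ :=
    fun p q => (p.val : ℝ) * (q.val : ℝ) - (if p.val = q.val then (n:ℝ) * n + 1 else 0)
    with hcc
  set Φ : (Fin (m+1) → Fin (n+1) → ℝ) → ℝ := fun w => ∑ p, ∑ q, w p q * cc p q with hΦ
  have hΦcont : Continuous Φ := by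
    rw [hΦ]
    exact continuous_finset_sum _ fun p _ => continuous_finset_sum _ fun q _ =>
      by fun_prop
  obtain ⟨w, hwS, hwmin⟩ := hScompact.exists_isMinOn hSne hΦcont.continuousOn
  obtain ⟨hw0, hwr, hwc, hwK⟩ := hwS
  have hwS' : w ∈ S := ⟨hw0, hwr, hwc, hwK⟩
  -- improvement step: a strictly Φ-decreasing cost-nonincreasing swap is impossible
  have hstep : ∀ (r1 r2 : Fin (m+1)) (c1 c2 : Fin (n+1)), r1 ≠ r2 → c1 ≠ c2 →
      0 < w r1 c2 → 0 < w r2 c1 →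
      D r1.val c1.val + D r2.val c2.val ≤ D r1.val c2.val + D r2.val c1.val →
      cc r1 c1 + cc r2 c2 - cc r1 c2 - cc r2 c1 < 0 → False := by
    intro r1 r2 c1 c2 hr hc h1 h2 hcost hφneg
    obtain ⟨w', h0', hr', hc', hφ⟩ :=
      swap_lemma (π m) (π n) w hw0 hwr hwc r1 r2 c1 c2 hr hc h1 h2
    set ε := min (w r1 c2) (w r2 c1) with hεdef
    have hε : 0 < ε := lt_min h1 h2
    have hΔ : D r1.val c1.val + D r2.val c2.val - D r1.val c2.val - D r2.val c1.val ≤ 0 := by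
      linarith
    have hcostf := hφ (fun p q => D p.val q.val)
    have hKle : K ≤ ∑ p, ∑ q, w' p q * D p.val q.val := by
      obtain ⟨hpl, hco⟩ := hplan_of w' h0' hr' hc'
      rw [← hco]
      exact rot_le_cost π D hD m n _ hpl
    have hprod : ε * (D r1.val c1.val + D r2.val c2.val
        - D r1.val c2.val - D r2.val c1.val) ≤ 0 :=
      mul_nonpos_of_nonneg_of_nonpos hε.le hΔ
    have hcost' : ∑ p, ∑ q, w' p q * D p.val q.val = K := by
      rw [hcostf, hwK]
      have h := hKle
      rw [hcostf, hwK] at h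
      linarith
    have hw'S : w' ∈ S := ⟨h0', hr', hc', hcost'⟩
    have hmin : Φ w ≤ Φ w' := isMinOn_iff.mp hwmin w' hw'S
    have hφf := hφ cc
    have hlt : Φ w' < Φ w := by
      rw [hΦ]
      dsimp only
      rw [hφf]
      nlinarith [mul_pos hε (neg_pos.mpr hφneg)]
    linarith
  -- conclusion
  obtain ⟨hplan, hcosteq⟩ := hplan_of w hw0 hwr hwc
  refine ⟨toP w, hplan, by rw [hcosteq, hwK], ?_, ?_⟩
  · -- simplicity
    intro i hi
    have hi' : i < m + 1 := by omega
    have hi'' : i < n + 1 := by omega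
    have hz : toP w i i = w ⟨i, hi'⟩ ⟨i, hi''⟩ := by
      rw [htoP]
      exact dif_pos ⟨hi', hi''⟩
    rw [hz]
    have hub1 : w ⟨i, hi'⟩ ⟨i, hi''⟩ ≤ π m i := by
      have h1 : w ⟨i, hi'⟩ ⟨i, hi''⟩ ≤ ∑ q, w ⟨i, hi'⟩ q :=
        Finset.single_le_sum (fun q' _ => hw0 _ q') (Finset.mem_univ _)
      rw [hwr ⟨i, hi'⟩] at h1
      exact h1
    have hub2 : w ⟨i, hi'⟩ ⟨i, hi''⟩ ≤ π n i := by
      have h1 : w ⟨i, hi'⟩ ⟨i, hi''⟩ ≤ ∑ p, w p ⟨i, hi''⟩ :=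
        Finset.single_le_sum (fun p' _ => hw0 p' _) (Finset.mem_univ _)
      rw [hwc ⟨i, hi''⟩] at h1
      exact h1
    refine le_antisymm (le_min hub1 hub2) ?_
    by_contra hlt
    push_neg at hlt
    have hltm : w ⟨i, hi'⟩ ⟨i, hi''⟩ < π m i := lt_of_lt_of_le hlt (min_le_left _ _)
    have hltn : w ⟨i, hi'⟩ ⟨i, hi''⟩ < π n i := lt_of_lt_of_le hlt (min_le_right _ _)
    -- find an off-diagonal positive entry in row i
    have hcol2 : ∃ c2 : Fin (n+1), c2 ≠ ⟨i, hi''⟩ ∧ 0 < w ⟨i, hi'⟩ c2 := by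
      by_contra hno
      push_neg at hno
      have hall : ∀ q : Fin (n+1), q ≠ ⟨i, hi''⟩ → w ⟨i, hi'⟩ q = 0 := by
        intro q hq
        exact le_antisymm (hno q hq) (hw0 _ _)
      have := Finset.sum_eq_single_of_mem (⟨i, hi''⟩ : Fin (n+1)) (Finset.mem_univ _)
        (fun q _ hq => hall q hq)
      rw [hwr ⟨i, hi'⟩] at this
      dsimp only at this
      linarith
    have hrow2 : ∃ r2 : Fin (m+1), r2 ≠ ⟨i, hi'⟩ ∧ 0 < w r2 ⟨i, hi''⟩ := by
      by_contra hno
      push_neg at hno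
      have hall : ∀ p : Fin (m+1), p ≠ ⟨i, hi'⟩ → w p ⟨i, hi''⟩ = 0 := by
        intro p hp
        exact le_antisymm (hno p hp) (hw0 _ _)
      have := Finset.sum_eq_single_of_mem (⟨i, hi'⟩ : Fin (m+1)) (Finset.mem_univ _)
        (fun p _ hp => hall p hp)
      rw [hwc ⟨i, hi''⟩] at this
      dsimp only at this
      linarith
    obtain ⟨c2, hc2ne, hc2pos⟩ := hcol2
    obtain ⟨r2, hr2ne, hr2pos⟩ := hrow2
    refine hstep ⟨i, hi'⟩ r2 ⟨i, hi''⟩ c2 (Ne.symm hr2ne) (Ne.symm hc2ne) hc2pos hr2pos ?_ ?_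
    · -- cost inequality via triangle and diagonal
      have ht := htri r2.val c2.val i
      have hd := hdiag i
      dsimp only
      linarith
    · -- strict Φ decrease
      rw [hcc]
      dsimp only
      have hc2i : (c2.val : ℕ) ≠ i := by
        intro h
        exact hc2ne (Fin.ext h)
      have hr2i : (r2.val : ℕ) ≠ i := by
        intro h
        exact hr2ne (Fin.ext h)
      have hin : (i : ℝ) ≤ n := by
        have : (i : ℕ) ≤ n := by omega
        exact_mod_cast this
      have hr2n : (r2.val : ℝ) ≤ n := by
        have : (r2.val : ℕ) ≤ n := by omega
        exact_mod_cast this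
      have hc2n : (c2.val : ℝ) ≤ n := by
        have : (c2.val : ℕ) ≤ n := by omega
        exact_mod_cast this
      have hi0 : (0:ℝ) ≤ (i:ℝ) := Nat.cast_nonneg i
      have hr20 : (0:ℝ) ≤ (r2.val : ℝ) := Nat.cast_nonneg _
      have hc20 : (0:ℝ) ≤ (c2.val : ℝ) := Nat.cast_nonneg _
      have hb1 : (0:ℝ) ≤ ((n:ℝ) - (i:ℝ) + (r2.val:ℝ)) * ((n:ℝ) + (i:ℝ) - (c2.val:ℝ)) :=
        mul_nonneg (by linarith) (by linarith)
      have hb2 : (0:ℝ) ≤ ((n:ℝ) + (i:ℝ) - (r2.val:ℝ)) * ((n:ℝ) - (i:ℝ) + (c2.val:ℝ)) :=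
        mul_nonneg (by linarith) (by linarith)
      rw [if_pos rfl, if_neg (Ne.symm hc2i), if_neg hr2i]
      split_ifs with h
      · nlinarith
      · nlinarith
  · -- nestedness
    intro i j k l hij hjk hkl
    by_contra hcon
    push_neg at hcon
    obtain ⟨hik, hjl⟩ := hcon
    rw [htoP] at hik hjl
    dsimp only at hik hjl
    by_cases hb1 : i < m + 1 ∧ k < n + 1
    case neg => rw [dif_neg hb1] at hik; exact hik rfl
    by_cases hb2 : j < m + 1 ∧ l < n + 1
    case neg => rw [dif_neg hb2] at hjl; exact hjl rfl
    rw [dif_pos hb1] at hik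
    rw [dif_pos hb2] at hjl
    have hikpos : 0 < w ⟨i, hb1.1⟩ ⟨k, hb1.2⟩ := (hw0 _ _).lt_of_ne (Ne.symm hik)
    have hjlpos : 0 < w ⟨j, hb2.1⟩ ⟨l, hb2.2⟩ := (hw0 _ _).lt_of_ne (Ne.symm hjl)
    have hkn : k < n + 1 := hb1.2
    refine hstep ⟨i, hb1.1⟩ ⟨j, hb2.1⟩ ⟨l, hb2.2⟩ ⟨k, hkn⟩
      (by simp [Fin.ext_iff]; omega) (by simp [Fin.ext_iff]; omega) hikpos hjlpos ?_ ?_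
    · dsimp only
      exact hQ i j k l (by omega) (by omega) (by omega) (by omega)
    · rw [hcc]
      dsimp only
      rw [if_neg (by omega), if_neg (by omega), if_neg (by omega), if_neg (by omega)]
      have h1 : (0:ℝ) < ((j:ℝ) - (i:ℝ)) * ((l:ℝ) - (k:ℝ)) := by
        have hji : (i:ℝ) < (j:ℝ) := by exact_mod_cast hij
        have hlk : (k:ℝ) < (l:ℝ) := by exact_mod_cast hkl
        exact mul_pos (by linarith) (by linarith)
      nlinarith
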